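/- Pizza Theorem (fair division among n/2 people): Let D be a disk, P a point of D, and n a multiple of 4. Divide D into 2n slices by n equiangular lines through P, numbering the slices 1,…,2n clockwise. For each k with 1 ≤ k ≤ n/2, the four slices numbered k, k + n/2, k + n, and k + 3n/2 have total area equal to (2/n) times the area of D. Consequently the 2n slices can be partitioned into n/2 groups of four slices each, all groups having equal total area. -/

import Mathlib

open Real MeasureTheory

/-- The closed angular sector at `P` of directions with angles in `[a, b]`. -/
def angularSector (P : ℂ) (a b : ℝ) : Set ℂ :=
  {z : ℂ | ∃ t : ℝ, 0 ≤ t ∧ ∃ φ : ℝ, a ≤ φ ∧ φ ≤ b ∧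
    z = P + (t : ℂ) * Complex.exp ((φ : ℝ) * Complex.I)}

/-- Slice number `j` (for `1 ≤ j ≤ 2n`) of the disk of radius `R` about `O`, cut by the
`n` equiangular lines through `P` with base direction `θ`. -/
def pizzaSlice (O P : ℂ) (R θ : ℝ) (n j : ℕ) : Set ℂ :=
  Metric.closedBall O R ∩
    angularSector P (θ + ((j - 1 : ℕ) : ℝ) * π / n) (θ + (j : ℝ) * π / n)

noncomputable def csQ (Q : ℂ) (φ : ℝ) : ℝ :=
  ((starRingEnd ℂ) Q * Complex.exp ((φ : ℂ) * Complex.I)).re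

noncomputable def rad (R : ℝ) (Q : ℂ) (φ : ℝ) : ℝ :=
  csQ Q φ + Real.sqrt (csQ Q φ ^ 2 + R ^ 2 - ‖Q‖ ^ 2)

lemma abs_csQ_le (Q : ℂ) (φ : ℝ) : |csQ Q φ| ≤ ‖Q‖ := by
  calc |csQ Q φ| ≤ ‖(starRingEnd ℂ) Q * Complex.exp ((φ : ℂ) * Complex.I)‖ :=
        Complex.abs_re_le_norm _
    _ = ‖Q‖ := by
        rw [norm_mul, Complex.norm_exp_ofReal_mul_I, Complex.norm_conj, mul_one]

lemma csQ_pi (Q : ℂ) (φ : ℝ) : csQ Q (φ + π) = - csQ Q φ := by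
  unfold csQ
  rw [Complex.ofReal_add, add_mul, Complex.exp_add, Complex.exp_pi_mul_I]
  simp [mul_comm]

lemma csQ_sq_add (Q : ℂ) (φ : ℝ) :
    csQ Q φ ^ 2 + csQ Q (φ + π / 2) ^ 2 = ‖Q‖ ^ 2 := by
  unfold csQ
  rw [Complex.ofReal_add, add_mul, Complex.exp_add, ← mul_assoc]
  have h2 : Complex.exp ((↑(π / 2) : ℂ) * Complex.I) = Complex.I := by
    rw [Complex.exp_mul_I, ← Complex.ofReal_cos, ← Complex.ofReal_sin,
      Real.cos_pi_div_two, Real.sin_pi_div_two]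
    simp
  rw [h2, Complex.mul_I_re]
  set w := (starRingEnd ℂ) Q * Complex.exp ((φ : ℂ) * Complex.I) with hw
  have habs : ‖w‖ = ‖Q‖ := by
    rw [hw, norm_mul, Complex.norm_exp_ofReal_mul_I, Complex.norm_conj, mul_one]
  have := Complex.sq_norm w
  rw [habs, Complex.normSq_apply] at this
  nlinarith [this]

lemma continuous_csQ (Q : ℂ) : Continuous (csQ Q) := by
  unfold csQ; fun_prop

lemma continuous_rad (R : ℝ) (Q : ℂ) : Continuous (rad R Q) := by
  unfold rad
  exact (continuous_csQ Q).add (Real.continuous_sqrt.comp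
    ((((continuous_csQ Q).pow 2).add continuous_const).sub continuous_const))

lemma sqrt_facts (R : ℝ) (Q : ℂ) (hQ : ‖Q‖ ≤ R) (φ : ℝ) :
    Real.sqrt (csQ Q φ ^ 2 + R ^ 2 - ‖Q‖ ^ 2) ^ 2
      = csQ Q φ ^ 2 + R ^ 2 - ‖Q‖ ^ 2 ∧
    |csQ Q φ| ≤ Real.sqrt (csQ Q φ ^ 2 + R ^ 2 - ‖Q‖ ^ 2) ∧
    Real.sqrt (csQ Q φ ^ 2 + R ^ 2 - ‖Q‖ ^ 2) ≤ R := by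
  have h0 : (0:ℝ) ≤ ‖Q‖ := norm_nonneg Q
  have hd : ‖Q‖ ^ 2 ≤ R ^ 2 := by nlinarith
  have harg : (0:ℝ) ≤ csQ Q φ ^ 2 + R ^ 2 - ‖Q‖ ^ 2 := by nlinarith [sq_nonneg (csQ Q φ)]
  refine ⟨Real.sq_sqrt harg, ?_, ?_⟩
  · rw [← Real.sqrt_sq_eq_abs]
    exact Real.sqrt_le_sqrt (by nlinarith)
  · have : Real.sqrt (csQ Q φ ^ 2 + R ^ 2 - ‖Q‖ ^ 2) ≤ Real.sqrt (R ^ 2) := by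
      have hcd : csQ Q φ ^ 2 ≤ ‖Q‖ ^ 2 := by
        have := pow_le_pow_left₀ (abs_nonneg _) (abs_csQ_le Q φ) 2
        rwa [sq_abs] at this
      apply Real.sqrt_le_sqrt
      linarith
    rwa [Real.sqrt_sq (by linarith)] at this

lemma rad_nonneg {R : ℝ} {Q : ℂ} (hQ : ‖Q‖ ≤ R) (φ : ℝ) : 0 ≤ rad R Q φ := by
  obtain ⟨h1, h2, h3⟩ := sqrt_facts R Q hQ φ
  unfold rad
  cases abs_cases (csQ Q φ) with
  | inl h => linarith [Real.sqrt_nonneg (csQ Q φ ^ 2 + R ^ 2 - ‖Q‖ ^ 2), h.2]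
  | inr h => linarith [h.1 ▸ h2]

lemma rad_le {R : ℝ} {Q : ℂ} (hQ : ‖Q‖ ≤ R) (φ : ℝ) :
    rad R Q φ ≤ ‖Q‖ + R := by
  obtain ⟨h1, h2, h3⟩ := sqrt_facts R Q hQ φ
  unfold rad
  have := abs_csQ_le Q φ
  cases abs_cases (csQ Q φ) with
  | inl h => linarith
  | inr h => linarith

lemma four_sum {R : ℝ} {Q : ℂ} (hQ : ‖Q‖ ≤ R) (φ : ℝ) :
    rad R Q φ ^ 2 + rad R Q (φ + π / 2) ^ 2 + rad R Q (φ + π) ^ 2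
      + rad R Q (φ + 3 * π / 2) ^ 2 = 4 * R ^ 2 := by
  have e1 : φ + π = φ + π := rfl
  have h34 : φ + 3 * π / 2 = (φ + π / 2) + π := by ring
  have hc3 : csQ Q (φ + π) = - csQ Q φ := csQ_pi Q φ
  have hc4 : csQ Q (φ + 3 * π / 2) = - csQ Q (φ + π / 2) := by rw [h34, csQ_pi]
  obtain ⟨s1, _, _⟩ := sqrt_facts R Q hQ φ
  obtain ⟨s2, _, _⟩ := sqrt_facts R Q hQ (φ + π / 2)
  have key := csQ_sq_add Q φ
  unfold rad
  rw [hc3, hc4]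
  simp only [neg_sq]
  nlinarith [s1, s2, key]

lemma mem_ball_iff_rad {R : ℝ} {Q : ℂ} (hQ : ‖Q‖ ≤ R) {t : ℝ} (ht : 0 ≤ t) (φ : ℝ) :
    (t : ℂ) * Complex.exp ((φ : ℂ) * Complex.I) ∈ Metric.closedBall Q R ↔ t ≤ rad R Q φ := by
  obtain ⟨hs2, hcs, hsR⟩ := sqrt_facts R Q hQ φ
  set c := csQ Q φ with hc
  set s := Real.sqrt (c ^ 2 + R ^ 2 - ‖Q‖ ^ 2) with hs
  have hs0 : 0 ≤ s := Real.sqrt_nonneg _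
  have hR0 : 0 ≤ R := le_trans (norm_nonneg Q) hQ
  set E := Complex.exp ((φ : ℂ) * Complex.I) with hE
  have hnorm : ‖(t:ℂ) * E - Q‖ ^ 2 = t ^ 2 - 2 * t * c + ‖Q‖ ^ 2 := by
    rw [Complex.sq_norm, Complex.normSq_sub]
    have h1 : Complex.normSq ((t:ℂ) * E) = t ^ 2 := by
      have : ‖(t:ℂ) * E‖ = |t| := by
        rw [norm_mul, hE, Complex.norm_exp_ofReal_mul_I, mul_one, Complex.norm_real, Real.norm_eq_abs]
      rw [← Complex.sq_norm, this, sq_abs]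
    have h2 : ((t:ℂ) * E * (starRingEnd ℂ) Q).re = t * c := by
      rw [hc]
      unfold csQ
      rw [← hE]
      have : (t:ℂ) * E * (starRingEnd ℂ) Q = (t:ℂ) * ((starRingEnd ℂ) Q * E) := by ring
      rw [this, Complex.re_ofReal_mul]
    rw [h1, h2, ← Complex.sq_norm Q]
    ring
  rw [Metric.mem_closedBall, Complex.dist_eq]
  constructor
  · intro h
    have hsq : ‖(t:ℂ) * E - Q‖ ^ 2 ≤ R ^ 2 :=
      pow_le_pow_left₀ (norm_nonneg _) h 2
    rw [hnorm] at hsq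
    by_contra hcon
    push_neg at hcon
    unfold rad at hcon
    rw [← hc, ← hs] at hcon
    nlinarith [hs2]
  · intro h
    unfold rad at h
    rw [← hc, ← hs] at h
    have hc_le : c ≤ s := le_trans (le_abs_self c) hcs
    have hlow : -s ≤ t - c := by linarith
    have hup : t - c ≤ s := by linarith
    have : ‖(t:ℂ) * E - Q‖ ^ 2 ≤ R ^ 2 := by
      rw [hnorm]
      nlinarith [hs2]
    have habs := Real.sqrt_le_sqrt this
    rwa [Real.sqrt_sq (norm_nonneg _), Real.sqrt_sq hR0] at habs

lemma mem_sector_zero {a b : ℝ} {z : ℂ} :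
    z ∈ angularSector 0 a b ↔
      ∃ t : ℝ, 0 ≤ t ∧ ∃ φ : ℝ, a ≤ φ ∧ φ ≤ b ∧ z = (t : ℂ) * Complex.exp ((φ : ℂ) * Complex.I) := by
  unfold angularSector
  simp

lemma sector_inter_ball_eq (a b M : ℝ) (hM : 0 ≤ M) :
    angularSector 0 a b ∩ Metric.closedBall 0 M =
      (fun p : ℝ × ℝ => (p.1 : ℂ) * Complex.exp ((p.2 : ℂ) * Complex.I)) ''
        (Set.Icc 0 M ×ˢ Set.Icc a b) := by
  ext z
  simp only [Set.mem_inter_iff, mem_sector_zero, Metric.mem_closedBall, Complex.dist_eq,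
    sub_zero, Set.mem_image, Set.mem_prod, Set.mem_Icc, Prod.exists]
  constructor
  · rintro ⟨⟨t, ht, φ, hφ1, hφ2, rfl⟩, hball⟩
    refine ⟨t, φ, ⟨⟨ht, ?_⟩, hφ1, hφ2⟩, rfl⟩
    have : ‖(t:ℂ) * Complex.exp ((φ:ℂ) * Complex.I)‖ = t := by
      rw [norm_mul, Complex.norm_exp_ofReal_mul_I, mul_one, Complex.norm_real, Real.norm_eq_abs, abs_of_nonneg ht]
    rwa [this] at hball
  · rintro ⟨t, φ, ⟨⟨ht0, htM⟩, hφ1, hφ2⟩, rfl⟩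
    refine ⟨⟨t, ht0, φ, hφ1, hφ2, rfl⟩, ?_⟩
    rw [norm_mul, Complex.norm_exp_ofReal_mul_I, mul_one, Complex.norm_real, Real.norm_eq_abs, abs_of_nonneg ht0]
    exact htM

lemma isCompact_sector_inter_ball (a b M : ℝ) (hM : 0 ≤ M) :
    IsCompact (angularSector 0 a b ∩ Metric.closedBall 0 M) := by
  rw [sector_inter_ball_eq a b M hM]
  apply (isCompact_Icc.prod isCompact_Icc).image
  fun_prop

lemma area_core (R : ℝ) (hR : 0 < R) (Q : ℂ) (hQ : ‖Q‖ ≤ R) (a b : ℝ)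
    (hab : a ≤ b) (ha : -π < a) (hb : b < π) :
    volume (Metric.closedBall Q R ∩ angularSector 0 a b) =
      ENNReal.ofReal (∫ φ in a..b, rad R Q φ ^ 2 / 2) := by
  set M : ℝ := ‖Q‖ + R with hMdef
  have hR0 : (0:ℝ) ≤ R := le_of_lt hR
  have hM : (0:ℝ) ≤ M := by positivity
  set S : Set ℂ := Metric.closedBall Q R ∩ angularSector 0 a b with hSdef
  have hsub : Metric.closedBall Q R ⊆ Metric.closedBall 0 M := by
    apply Metric.closedBall_subset_closedBall'
    rw [Complex.dist_eq, sub_zero, hMdef]; linarith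
  have hSeq : S = Metric.closedBall Q R ∩ (angularSector 0 a b ∩ Metric.closedBall 0 M) := by
    ext z
    constructor
    · rintro ⟨h1, h2⟩; exact ⟨h1, h2, hsub h1⟩
    · rintro ⟨h1, h2, _⟩; exact ⟨h1, h2⟩
  have hSm : MeasurableSet S := by
    rw [hSeq]
    exact measurableSet_closedBall.inter
      (isCompact_sector_inter_ball a b M hM).isClosed.measurableSet
  have hfin : volume S ≠ ⊤ := by
    refine ne_of_lt (lt_of_le_of_lt (measure_mono (Set.inter_subset_left)) ?_)
    exact measure_closedBall_lt_top
  set W : Set (ℝ × ℝ) :=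
    {p : ℝ × ℝ | (a ≤ p.2 ∧ p.2 ≤ b) ∧ 0 < p.1 ∧ p.1 ≤ rad R Q p.2} with hWdef
  have hWm : MeasurableSet W := by
    apply MeasurableSet.inter
    · exact (measurableSet_le measurable_const measurable_snd).inter
        (measurableSet_le measurable_snd measurable_const)
    · exact (measurableSet_lt measurable_const measurable_fst).inter
        (measurableSet_le measurable_fst
          (((continuous_rad R Q).measurable).comp measurable_snd))
  have hsymm : ∀ p : ℝ × ℝ, Complex.polarCoord.symm p
      = (p.1 : ℂ) * Complex.exp ((p.2 : ℂ) * Complex.I) := by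
    intro p
    rw [Complex.polarCoord_symm_apply, Complex.exp_mul_I, ← Complex.ofReal_cos,
      ← Complex.ofReal_sin]
  have hWsub : W ⊆ polarCoord.target := by
    rintro p ⟨⟨hp1, hp2⟩, hp3, _⟩
    rw [polarCoord_target]
    exact ⟨hp3, lt_of_lt_of_le ha hp1, lt_of_le_of_lt hp2 hb⟩
  have hmem : ∀ p ∈ polarCoord.target, (Complex.polarCoord.symm p ∈ S ↔ p ∈ W) := by
    rintro p hp
    rw [polarCoord_target] at hp
    have hp1 : 0 < p.1 := hp.1
    have hp2a : -π < p.2 := hp.2.1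
    have hp2b : p.2 < π := hp.2.2
    rw [hsymm]
    constructor
    · rintro ⟨hball, hsec⟩
      have hrad : p.1 ≤ rad R Q p.2 := (mem_ball_iff_rad hQ (le_of_lt hp1) p.2).mp hball
      rw [mem_sector_zero] at hsec
      obtain ⟨t, ht, φ, hφ1, hφ2, heq⟩ := hsec
      have habs : t = p.1 := by
        have h1 := congrArg norm heq
        rw [norm_mul, norm_mul, Complex.norm_exp_ofReal_mul_I, Complex.norm_exp_ofReal_mul_I,
          mul_one, mul_one, Complex.norm_real, Real.norm_eq_abs, Complex.norm_real, Real.norm_eq_abs,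
          abs_of_nonneg (le_of_lt hp1), abs_of_nonneg ht] at h1
        exact h1.symm
      subst habs
      have hexp : Complex.exp ((p.2 : ℂ) * Complex.I) = Complex.exp ((φ : ℂ) * Complex.I) := by
        have ht0 : ((p.1 : ℝ) : ℂ) ≠ 0 := by
          exact_mod_cast ne_of_gt hp1
        exact mul_left_cancel₀ ht0 heq
      obtain ⟨k, hk⟩ := Complex.exp_eq_exp_iff_exists_int.mp hexp
      have hkim : p.2 = φ + k * (2 * π) := by
        have := congrArg Complex.im hk
        simpa using this
      have hk0 : k = 0 := by
        have h1 : |(k : ℝ)| < 1 := by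
          rw [abs_lt]
          constructor <;> nlinarith [pi_pos]
        have h2 : |k| < 1 := by exact_mod_cast h1
        exact Int.abs_lt_one_iff.mp h2
      rw [hk0] at hkim
      simp at hkim
      exact Set.mem_setOf.mpr ⟨⟨hkim ▸ hφ1, hkim ▸ hφ2⟩, hp1, hrad⟩
    · intro hpW
      simp only [hWdef, Set.mem_setOf_eq] at hpW
      obtain ⟨⟨hp2l, hp2r⟩, hp3, hp4⟩ := hpW
      exact Set.mem_inter ((mem_ball_iff_rad hQ (le_of_lt hp3) p.2).mpr hp4)
        (mem_sector_zero.mpr ⟨p.1, le_of_lt hp3, p.2, hp2l, hp2r, rfl⟩)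
  -- step 1
  have h1 : volume S = ENNReal.ofReal (∫ z, S.indicator (1 : ℂ → ℝ) z) := by
    rw [MeasureTheory.integral_indicator_one hSm, measureReal_def, ENNReal.ofReal_toReal hfin]
  -- step 2 : change of variables
  have h2 : ∫ z, S.indicator (1 : ℂ → ℝ) z
      = ∫ p in polarCoord.target, p.1 • S.indicator (1 : ℂ → ℝ) (Complex.polarCoord.symm p) :=
    (Complex.integral_comp_polarCoord_symm (S.indicator (1 : ℂ → ℝ))).symm
  -- step 3 : rewrite as indicator of W
  have h3 : ∫ p in polarCoord.target, p.1 • S.indicator (1 : ℂ → ℝ) (Complex.polarCoord.symm p)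
      = ∫ p : ℝ × ℝ, W.indicator (fun p : ℝ × ℝ => p.1) p := by
    rw [← MeasureTheory.integral_indicator polarCoord.open_target.measurableSet]
    congr 1
    funext p
    by_cases hp : p ∈ polarCoord.target
    · rw [Set.indicator_of_mem hp]
      by_cases hz : Complex.polarCoord.symm p ∈ S
      · rw [Set.indicator_of_mem hz, Set.indicator_of_mem ((hmem p hp).mp hz)]
        simp
      · rw [Set.indicator_of_notMem hz,
          Set.indicator_of_notMem (fun hW => hz ((hmem p hp).mpr hW))]
        simp
    · rw [Set.indicator_of_notMem hp,
        Set.indicator_of_notMem (fun hW => hp (hWsub hW))]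
  -- integrability
  have hint : Integrable (W.indicator (fun p : ℝ × ℝ => p.1)) volume := by
    have hbox : MeasurableSet (Set.Icc (0:ℝ) M ×ˢ Set.Icc a b) :=
      measurableSet_Icc.prod measurableSet_Icc
    refine Integrable.mono'
      (g := (Set.Icc (0:ℝ) M ×ˢ Set.Icc a b).indicator (fun _ => M)) ?_ ?_ ?_
    · rw [integrable_indicator_iff hbox]
      exact integrableOn_const
        (isCompact_Icc.prod isCompact_Icc).measure_lt_top.ne
    · exact (measurable_fst.indicator hWm).aestronglyMeasurable
    · refine Filter.Eventually.of_forall fun p => ?_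
      by_cases hpW : p ∈ W
      · have hpW' := hpW
        simp only [hWdef, Set.mem_setOf_eq] at hpW'
        obtain ⟨⟨hb1, hb2⟩, hb3, hb4⟩ := hpW'
        have hbound : p.1 ≤ M := le_trans hb4 (rad_le hQ p.2)
        rw [Set.indicator_of_mem hpW, Set.indicator_of_mem
          (Set.mem_prod.mpr ⟨Set.mem_Icc.mpr ⟨le_of_lt hb3, hbound⟩,
            Set.mem_Icc.mpr ⟨hb1, hb2⟩⟩)]
        rw [Real.norm_eq_abs, abs_of_pos hb3]
        exact hbound
      · rw [Set.indicator_of_notMem hpW]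
        simp only [norm_zero]
        exact Set.indicator_nonneg (fun _ _ => hM) p
  -- step 4 : Fubini
  have h4 : ∫ p : ℝ × ℝ, W.indicator (fun p : ℝ × ℝ => p.1) p
      = ∫ φ in a..b, rad R Q φ ^ 2 / 2 := by
    rw [MeasureTheory.Measure.volume_eq_prod] at hint ⊢
    rw [MeasureTheory.integral_prod _ hint]
    rw [MeasureTheory.integral_integral_swap (by exact hint)]
    have hinner : ∀ φ : ℝ, (∫ t : ℝ, W.indicator (fun p : ℝ × ℝ => p.1) (t, φ))
        = (Set.Icc a b).indicator (fun φ => rad R Q φ ^ 2 / 2) φ := by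
      intro φ
      by_cases hφ : φ ∈ Set.Icc a b
      · have hfun : (fun t : ℝ => W.indicator (fun p : ℝ × ℝ => p.1) (t, φ))
            = (Set.Ioc 0 (rad R Q φ)).indicator id := by
          funext t
          by_cases ht : t ∈ Set.Ioc 0 (rad R Q φ)
          · rw [Set.indicator_of_mem ht,
              Set.indicator_of_mem (Set.mem_setOf.mpr ⟨⟨hφ.1, hφ.2⟩, ht.1, ht.2⟩)]
            rfl
          · rw [Set.indicator_of_notMem ht, Set.indicator_of_notMem]
            intro hmemW
            simp only [hWdef, Set.mem_setOf_eq] at hmemW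
            exact ht ⟨hmemW.2.1, hmemW.2.2⟩
        rw [hfun, MeasureTheory.integral_indicator measurableSet_Ioc,
          Set.indicator_of_mem hφ]
        have h0r : (0:ℝ) ≤ rad R Q φ := rad_nonneg hQ φ
        rw [← intervalIntegral.integral_of_le h0r]
        simp only [id_eq]
        rw [integral_id]
        ring
      · rw [Set.indicator_of_notMem hφ]
        have hfun : (fun t : ℝ => W.indicator (fun p : ℝ × ℝ => p.1) (t, φ))
            = fun _ => 0 := by
          funext t
          rw [Set.indicator_of_notMem]
          intro hmemW
          simp only [hWdef, Set.mem_setOf_eq] at hmemW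
          exact hφ ⟨hmemW.1.1, hmemW.1.2⟩
        rw [hfun]
        simp
    rw [MeasureTheory.integral_congr_ae (Filter.Eventually.of_forall hinner)]
    rw [MeasureTheory.integral_indicator measurableSet_Icc,
      MeasureTheory.integral_Icc_eq_integral_Ioc, ← intervalIntegral.integral_of_le hab]
  rw [h1, h2, h3, h4]

lemma exp_neg_mul_exp (γ : ℝ) :
    Complex.exp (((-γ : ℝ) : ℂ) * Complex.I) * Complex.exp ((γ : ℂ) * Complex.I) = 1 := by
  rw [← Complex.exp_add, show ((-γ : ℝ) : ℂ) * Complex.I + (γ : ℂ) * Complex.I = 0 by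
    push_cast; ring, Complex.exp_zero]

lemma rotation_preimage_ball (γ : ℝ) (Q : ℂ) (R : ℝ) :
    (fun z : ℂ => Complex.exp ((γ : ℂ) * Complex.I) * z) ⁻¹' Metric.closedBall Q R
      = Metric.closedBall (Complex.exp (((-γ : ℝ) : ℂ) * Complex.I) * Q) R := by
  ext z
  simp only [Set.mem_preimage, Metric.mem_closedBall, Complex.dist_eq]
  have hdiff : Complex.exp ((γ : ℂ) * Complex.I) * z - Q
      = Complex.exp ((γ : ℂ) * Complex.I)
        * (z - Complex.exp (((-γ : ℝ) : ℂ) * Complex.I) * Q) := by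
    rw [mul_sub, ← mul_assoc,
      mul_comm (Complex.exp ((γ:ℂ) * Complex.I)) (Complex.exp (((-γ : ℝ) : ℂ) * Complex.I)),
      exp_neg_mul_exp, one_mul]
  rw [hdiff, norm_mul, Complex.norm_exp_ofReal_mul_I, one_mul]

lemma rotation_preimage_sector (γ a b : ℝ) :
    (fun z : ℂ => Complex.exp ((γ : ℂ) * Complex.I) * z) ⁻¹' angularSector 0 a b
      = angularSector 0 (a - γ) (b - γ) := by
  ext z
  simp only [Set.mem_preimage, mem_sector_zero]
  constructor
  · rintro ⟨t, ht, φ, hφ1, hφ2, heq⟩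
    refine ⟨t, ht, φ - γ, by linarith, by linarith, ?_⟩
    have : Complex.exp ((γ:ℂ) * Complex.I) * ((t:ℂ) * Complex.exp ((↑(φ - γ) : ℂ) * Complex.I))
        = (t:ℂ) * Complex.exp ((φ:ℂ) * Complex.I) := by
      rw [mul_comm, mul_assoc, ← Complex.exp_add]
      congr 2
      push_cast; ring
    apply mul_left_cancel₀ (Complex.exp_ne_zero ((γ:ℂ) * Complex.I))
    rw [this, ← heq]
  · rintro ⟨t, ht, ψ, hψ1, hψ2, rfl⟩
    refine ⟨t, ht, ψ + γ, by linarith, by linarith, ?_⟩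
    rw [mul_comm, mul_assoc, ← Complex.exp_add]
    congr 2
    push_cast; ring

lemma measurableSet_ball_inter_sector (Q : ℂ) (R a b : ℝ) (hR : 0 ≤ R) :
    MeasurableSet (Metric.closedBall Q R ∩ angularSector 0 a b) := by
  set M : ℝ := ‖Q‖ + R with hMdef
  have hM : (0:ℝ) ≤ M := by positivity
  have hsub : Metric.closedBall Q R ⊆ Metric.closedBall 0 M := by
    apply Metric.closedBall_subset_closedBall'
    rw [Complex.dist_eq, sub_zero, hMdef]; linarith
  have hSeq : Metric.closedBall Q R ∩ angularSector 0 a b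
      = Metric.closedBall Q R ∩ (angularSector 0 a b ∩ Metric.closedBall 0 M) := by
    ext z
    constructor
    · rintro ⟨h1, h2⟩; exact ⟨h1, h2, hsub h1⟩
    · rintro ⟨h1, h2, _⟩; exact ⟨h1, h2⟩
  rw [hSeq]
  exact measurableSet_closedBall.inter
    (isCompact_sector_inter_ball a b M hM).isClosed.measurableSet

lemma rad_rot (R γ : ℝ) (Q : ℂ) (φ : ℝ) :
    rad R (Complex.exp (((-γ : ℝ) : ℂ) * Complex.I) * Q) φ = rad R Q (φ + γ) := by
  have habs : ‖Complex.exp (((-γ : ℝ) : ℂ) * Complex.I) * Q‖ = ‖Q‖ := by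
    rw [norm_mul, Complex.norm_exp_ofReal_mul_I, one_mul]
  have hcs : csQ (Complex.exp (((-γ : ℝ) : ℂ) * Complex.I) * Q) φ = csQ Q (φ + γ) := by
    unfold csQ
    congr 1
    rw [map_mul, ← Complex.exp_conj]
    have hconj : (starRingEnd ℂ) (((-γ : ℝ) : ℂ) * Complex.I) = (γ : ℂ) * Complex.I := by
      simp [Complex.conj_ofReal]
    rw [hconj, mul_comm (Complex.exp ((γ:ℂ) * Complex.I)) ((starRingEnd ℂ) Q), mul_assoc,
      ← Complex.exp_add]
    congr 2
    push_cast; ring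
  unfold rad
  rw [habs, hcs]

lemma area_sector (R : ℝ) (hR : 0 < R) (Q : ℂ) (hQ : ‖Q‖ ≤ R) (a b : ℝ)
    (hab : a ≤ b) (hlen : b - a ≤ π / 2) :
    volume (Metric.closedBall Q R ∩ angularSector 0 a b) =
      ENNReal.ofReal (∫ φ in a..b, rad R Q φ ^ 2 / 2) := by
  set γ : ℝ := (a + b) / 2 with hγ
  set Q' : ℂ := Complex.exp (((-γ : ℝ) : ℂ) * Complex.I) * Q with hQ'
  have habsQ' : ‖Q'‖ = ‖Q‖ := by
    rw [hQ', norm_mul, Complex.norm_exp_ofReal_mul_I, one_mul]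
  have hrotmp : MeasurePreserving (fun z : ℂ => Complex.exp ((γ : ℂ) * Complex.I) * z) := by
    have h1 : ‖Complex.exp ((γ : ℂ) * Complex.I)‖ = 1 :=
      Complex.norm_exp_ofReal_mul_I γ
    have hmemc : Complex.exp ((γ : ℂ) * Complex.I) ∈ Submonoid.unitSphere ℂ := by
      exact mem_sphere_zero_iff_norm.mpr h1
    have := (rotation (Circle.exp γ)).measurePreserving
    convert this using 1
    funext z
    rw [rotation_apply, Circle.coe_exp]
  have hmeas : MeasurableSet (Metric.closedBall Q R ∩ angularSector 0 a b) :=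
    measurableSet_ball_inter_sector Q R a b (le_of_lt hR)
  have hpre : (fun z : ℂ => Complex.exp ((γ : ℂ) * Complex.I) * z) ⁻¹'
        (Metric.closedBall Q R ∩ angularSector 0 a b)
      = Metric.closedBall Q' R ∩ angularSector 0 (a - γ) (b - γ) := by
    rw [Set.preimage_inter, rotation_preimage_ball, rotation_preimage_sector, hQ']
  have hvol : volume (Metric.closedBall Q R ∩ angularSector 0 a b)
      = volume (Metric.closedBall Q' R ∩ angularSector 0 (a - γ) (b - γ)) := by
    rw [← hpre]
    exact (hrotmp.measure_preimage hmeas.nullMeasurableSet).symm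
  rw [hvol]
  have hpi : 0 < π := pi_pos
  have h1 : -π < a - γ := by rw [hγ]; nlinarith
  have h2 : b - γ < π := by rw [hγ]; nlinarith
  have h3 : a - γ ≤ b - γ := by linarith
  rw [area_core R hR Q' (habsQ' ▸ hQ) (a - γ) (b - γ) h3 h1 h2]
  congr 1
  have hfun : ∀ φ : ℝ, rad R Q' φ ^ 2 / 2 = (fun ψ => rad R Q ψ ^ 2 / 2) (φ + γ) := by
    intro φ
    simp only [hQ', rad_rot]
  rw [intervalIntegral.integral_congr (g := fun φ => (fun ψ => rad R Q ψ ^ 2 / 2) (φ + γ))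
    (fun φ _ => hfun φ)]
  rw [intervalIntegral.integral_comp_add_right (fun ψ => rad R Q ψ ^ 2 / 2) γ]
  norm_num


lemma translate_preimage_ball (P O : ℂ) (R : ℝ) :
    (fun z : ℂ => z + P) ⁻¹' Metric.closedBall O R = Metric.closedBall (O - P) R := by
  ext z
  simp only [Set.mem_preimage, Metric.mem_closedBall, Complex.dist_eq]
  have : z + P - O = z - (O - P) := by ring
  rw [this]

lemma translate_preimage_sector (P : ℂ) (a b : ℝ) :
    (fun z : ℂ => z + P) ⁻¹' angularSector P a b = angularSector 0 a b := by
  ext z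
  simp only [Set.mem_preimage]
  unfold angularSector
  simp only [Set.mem_setOf_eq, zero_add]
  constructor
  · rintro ⟨t, ht, φ, h1, h2, heq⟩
    exact ⟨t, ht, φ, h1, h2, by linear_combination heq⟩
  · rintro ⟨t, ht, φ, h1, h2, heq⟩
    exact ⟨t, ht, φ, h1, h2, by linear_combination heq⟩

lemma volume_pizzaSlice (O P : ℂ) (R θ : ℝ) (hR : 0 < R) (hP : P ∈ Metric.closedBall O R)
    {n : ℕ} (j : ℕ) (hn4 : 4 ≤ n) :
    volume (pizzaSlice O P R θ n j) =
      ENNReal.ofReal (∫ φ in (θ + ((j - 1 : ℕ) : ℝ) * π / n)..(θ + (j : ℝ) * π / n),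
        rad R (O - P) φ ^ 2 / 2) := by
  have hQ : ‖O - P‖ ≤ R := by
    rw [Metric.mem_closedBall] at hP
    rw [← Complex.dist_eq, dist_comm]
    exact hP
  have hn0 : (0:ℝ) < n := by
    have : (4:ℝ) ≤ n := by exact_mod_cast hn4
    linarith
  have hpre : (fun z : ℂ => z + P) ⁻¹' pizzaSlice O P R θ n j
      = Metric.closedBall (O - P) R ∩
          angularSector 0 (θ + ((j - 1 : ℕ) : ℝ) * π / n) (θ + (j : ℝ) * π / n) := by
    unfold pizzaSlice
    rw [Set.preimage_inter, translate_preimage_ball, translate_preimage_sector]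
  have hvol : volume (pizzaSlice O P R θ n j)
      = volume ((fun z : ℂ => z + P) ⁻¹' pizzaSlice O P R θ n j) := by
    exact (measure_preimage_add_right volume P _).symm
  rw [hvol, hpre]
  have hc : ((j - 1 : ℕ) : ℝ) ≤ (j : ℝ) := by exact_mod_cast Nat.sub_le j 1
  have hc2 : (j : ℝ) ≤ ((j - 1 : ℕ) : ℝ) + 1 := by
    have : j ≤ (j - 1) + 1 := by omega
    exact_mod_cast this
  have hpn : (0:ℝ) ≤ π / n := by positivity
  have hab : θ + ((j - 1 : ℕ) : ℝ) * π / n ≤ θ + (j : ℝ) * π / n := by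
    have h := mul_le_mul_of_nonneg_right hc hpn
    have e1 : ((j - 1 : ℕ) : ℝ) * (π / n) = ((j - 1 : ℕ) : ℝ) * π / n := by ring
    have e2 : (j : ℝ) * (π / n) = (j : ℝ) * π / n := by ring
    rw [e1, e2] at h
    linarith
  have hlen : (θ + (j : ℝ) * π / n) - (θ + ((j - 1 : ℕ) : ℝ) * π / n) ≤ π / 2 := by
    have h1 : (θ + (j : ℝ) * π / n) - (θ + ((j - 1 : ℕ) : ℝ) * π / n)
        = ((j : ℝ) - ((j - 1 : ℕ) : ℝ)) * (π / n) := by ring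
    have h2 : (j : ℝ) - ((j - 1 : ℕ) : ℝ) ≤ 1 := by linarith
    have h3 : ((j : ℝ) - ((j - 1 : ℕ) : ℝ)) * (π / n) ≤ 1 * (π / n) :=
      mul_le_mul_of_nonneg_right h2 hpn
    have h4 : π / (n : ℝ) ≤ π / 2 := by
      apply div_le_div_of_nonneg_left (le_of_lt pi_pos) (by norm_num)
      exact_mod_cast le_trans (by norm_num) hn4
    linarith [h1 ▸ le_refl ((θ + (j : ℝ) * π / n) - (θ + ((j - 1 : ℕ) : ℝ) * π / n)), h3, h4,
      h1.le, h1.ge]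
  exact area_sector R hR (O - P) hQ _ _ hab hlen


theorem pizza_stmt5
    (O P : ℂ) (R : ℝ) (hR : 0 < R) (hP : P ∈ Metric.closedBall O R)
    (n : ℕ) (hn : 0 < n) (hmul : 4 ∣ n) (θ : ℝ) :
    ∀ k : ℕ, 1 ≤ k → k ≤ n / 2 →
      volume (pizzaSlice O P R θ n k) +
      volume (pizzaSlice O P R θ n (k + n / 2)) +
      volume (pizzaSlice O P R θ n (k + n)) +
      volume (pizzaSlice O P R θ n (k + 3 * n / 2)) =
      ENNReal.ofReal (2 / n * (π * R ^ 2)) := by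
  intro k hk1 hk2
  obtain ⟨m, rfl⟩ := hmul
  have hm : 1 ≤ m := by omega
  have hm0 : (0:ℝ) < (m:ℝ) := by exact_mod_cast hm
  have hm0' : (m:ℝ) ≠ 0 := ne_of_gt hm0
  have hn4 : 4 ≤ 4 * m := by omega
  have e1 : 4 * m / 2 = 2 * m := by omega
  have e2 : 3 * (4 * m) / 2 = 6 * m := by omega
  rw [e1, e2]
  have hQ : ‖O - P‖ ≤ R := by
    rw [Metric.mem_closedBall] at hP
    rw [← Complex.dist_eq, dist_comm]
    exact hP
  rw [volume_pizzaSlice O P R θ hR hP k hn4, volume_pizzaSlice O P R θ hR hP (k + 2*m) hn4,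
    volume_pizzaSlice O P R θ hR hP (k + 4*m) hn4, volume_pizzaSlice O P R θ hR hP (k + 6*m) hn4]
  set Q : ℂ := O - P with hQdef
  have c1 : ((k - 1 : ℕ) : ℝ) = (k:ℝ) - 1 := by
    have h : (k - 1) + 1 = k := by omega
    have := congrArg (Nat.cast : ℕ → ℝ) h
    push_cast at this
    linarith
  have c2 : ((k + 2*m - 1 : ℕ) : ℝ) = (k:ℝ) + 2*(m:ℝ) - 1 := by
    have h : (k + 2*m - 1) + 1 = k + 2*m := by omega
    have := congrArg (Nat.cast : ℕ → ℝ) h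
    push_cast at this
    linarith
  have c3 : ((k + 4*m - 1 : ℕ) : ℝ) = (k:ℝ) + 4*(m:ℝ) - 1 := by
    have h : (k + 4*m - 1) + 1 = k + 4*m := by omega
    have := congrArg (Nat.cast : ℕ → ℝ) h
    push_cast at this
    linarith
  have c4 : ((k + 6*m - 1 : ℕ) : ℝ) = (k:ℝ) + 6*(m:ℝ) - 1 := by
    have h : (k + 6*m - 1) + 1 = k + 6*m := by omega
    have := congrArg (Nat.cast : ℕ → ℝ) h
    push_cast at this
    linarith
  have E1 : (∫ φ in (θ + ((k - 1 : ℕ):ℝ) * π / ((4*m:ℕ):ℝ))..(θ + ((k:ℕ):ℝ) * π / ((4*m:ℕ):ℝ)),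
      rad R Q φ ^ 2 / 2)
      = ∫ φ in (θ + ((k:ℝ) - 1) * π / (4*(m:ℝ)))..(θ + (k:ℝ) * π / (4*(m:ℝ))),
          rad R Q φ ^ 2 / 2 := by
    congr 1
    · rw [c1]; push_cast; ring
    · push_cast; ring
  have E2 : (∫ φ in (θ + ((k + 2*m - 1 : ℕ):ℝ) * π / ((4*m:ℕ):ℝ))..(θ + ((k + 2*m:ℕ):ℝ) * π / ((4*m:ℕ):ℝ)),
      rad R Q φ ^ 2 / 2)
      = ∫ φ in (θ + ((k:ℝ) - 1) * π / (4*(m:ℝ)))..(θ + (k:ℝ) * π / (4*(m:ℝ))),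
          rad R Q (φ + π/2) ^ 2 / 2 := by
    rw [intervalIntegral.integral_comp_add_right (fun ψ => rad R Q ψ ^ 2 / 2) (π/2)]
    congr 1
    · rw [c2]; push_cast; field_simp; ring
    · push_cast; field_simp; ring
  have E3 : (∫ φ in (θ + ((k + 4*m - 1 : ℕ):ℝ) * π / ((4*m:ℕ):ℝ))..(θ + ((k + 4*m:ℕ):ℝ) * π / ((4*m:ℕ):ℝ)),
      rad R Q φ ^ 2 / 2)
      = ∫ φ in (θ + ((k:ℝ) - 1) * π / (4*(m:ℝ)))..(θ + (k:ℝ) * π / (4*(m:ℝ))),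
          rad R Q (φ + π) ^ 2 / 2 := by
    rw [intervalIntegral.integral_comp_add_right (fun ψ => rad R Q ψ ^ 2 / 2) π]
    congr 1
    · rw [c3]; push_cast; field_simp; ring
    · push_cast; field_simp; ring
  have E4 : (∫ φ in (θ + ((k + 6*m - 1 : ℕ):ℝ) * π / ((4*m:ℕ):ℝ))..(θ + ((k + 6*m:ℕ):ℝ) * π / ((4*m:ℕ):ℝ)),
      rad R Q φ ^ 2 / 2)
      = ∫ φ in (θ + ((k:ℝ) - 1) * π / (4*(m:ℝ)))..(θ + (k:ℝ) * π / (4*(m:ℝ))),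
          rad R Q (φ + 3*π/2) ^ 2 / 2 := by
    rw [intervalIntegral.integral_comp_add_right (fun ψ => rad R Q ψ ^ 2 / 2) (3*π/2)]
    congr 1
    · rw [c4]; push_cast; field_simp; ring
    · push_cast; field_simp; ring
  rw [E1, E2, E3, E4]
  set A : ℝ := θ + ((k:ℝ) - 1) * π / (4*(m:ℝ)) with hA
  set B : ℝ := θ + (k:ℝ) * π / (4*(m:ℝ)) with hB
  have hAB : A ≤ B := by
    rw [hA, hB]
    have h1 : ((k:ℝ) - 1) * π / (4*(m:ℝ)) ≤ (k:ℝ) * π / (4*(m:ℝ)) := by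
      apply div_le_div_of_nonneg_right ?_ (by positivity)
      nlinarith [pi_pos]
    linarith
  have hBA : B - A = π / (4*(m:ℝ)) := by
    rw [hA, hB]
    field_simp
    ring
  have contf : ∀ off : ℝ, Continuous fun φ : ℝ => rad R Q (φ + off) ^ 2 / 2 := by
    intro off
    exact (((continuous_rad R Q).comp (continuous_id.add continuous_const)).pow 2).div_const 2
  have cont0 : Continuous fun φ : ℝ => rad R Q φ ^ 2 / 2 :=
    ((continuous_rad R Q).pow 2).div_const 2
  have i0 : IntervalIntegrable (fun φ : ℝ => rad R Q φ ^ 2 / 2) volume A B :=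
    cont0.intervalIntegrable A B
  have i2 : IntervalIntegrable (fun φ : ℝ => rad R Q (φ + π/2) ^ 2 / 2) volume A B :=
    (contf (π/2)).intervalIntegrable A B
  have i3 : IntervalIntegrable (fun φ : ℝ => rad R Q (φ + π) ^ 2 / 2) volume A B :=
    (contf π).intervalIntegrable A B
  have i4 : IntervalIntegrable (fun φ : ℝ => rad R Q (φ + 3*π/2) ^ 2 / 2) volume A B :=
    (contf (3*π/2)).intervalIntegrable A B
  have nn : ∀ (f : ℝ → ℝ), (∀ x, 0 ≤ f x) → 0 ≤ ∫ φ in A..B, f φ := by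
    intro f hf
    exact intervalIntegral.integral_nonneg hAB (fun u _ => hf u)
  have nn0 : 0 ≤ ∫ φ in A..B, rad R Q φ ^ 2 / 2 := nn _ (fun x => by positivity)
  have nn2 : 0 ≤ ∫ φ in A..B, rad R Q (φ + π/2) ^ 2 / 2 := nn _ (fun x => by positivity)
  have nn3 : 0 ≤ ∫ φ in A..B, rad R Q (φ + π) ^ 2 / 2 := nn _ (fun x => by positivity)
  have nn4 : 0 ≤ ∫ φ in A..B, rad R Q (φ + 3*π/2) ^ 2 / 2 := nn _ (fun x => by positivity)
  rw [← ENNReal.ofReal_add nn0 nn2, ← ENNReal.ofReal_add (add_nonneg nn0 nn2) nn3,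
    ← ENNReal.ofReal_add (add_nonneg (add_nonneg nn0 nn2) nn3) nn4]
  congr 1
  rw [← intervalIntegral.integral_add i0 i2, ← intervalIntegral.integral_add (i0.add i2) i3,
    ← intervalIntegral.integral_add ((i0.add i2).add i3) i4]
  have hconst : ∀ φ ∈ Set.uIcc A B,
      rad R Q φ ^ 2 / 2 + rad R Q (φ + π/2) ^ 2 / 2 + rad R Q (φ + π) ^ 2 / 2
        + rad R Q (φ + 3*π/2) ^ 2 / 2 = (fun _ : ℝ => 2 * R ^ 2) φ := by
    intro φ _
    have h := four_sum hQ φ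
    simp only []
    linarith
  rw [intervalIntegral.integral_congr hconst, intervalIntegral.integral_const, smul_eq_mul, hBA]
  have hfin : π / (4*(m:ℝ)) * (2*R^2) = 2 / ((4*m:ℕ):ℝ) * (π*R^2) := by
    push_cast
    field_simp
  rw [hfin]
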